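/- If F ⊆ binom([n],k) is an initial family, then the shadow of the subfamily of sets avoiding the element 1 is contained in the link of 1: ∂F(\bar{1}) ⊆ F(1). -/

import Mathlib

def prec (A B : Finset ℕ) : Prop :=
  List.Forall₂ (· ≤ ·) (A.sort (· ≤ ·)) (B.sort (· ≤ ·))

lemma aux_forall2 (x a : ℕ) : ∀ l : List ℕ, l.Pairwise (· ≤ ·) → (∀ y ∈ l, x ≤ y) → x ≤ a →
    List.Forall₂ (· ≤ ·) (x :: l) (List.orderedInsert (· ≤ ·) a l)
  | [], _, _, hxa => by simp [hxa]
  | b :: t, hl, hx, hxa => by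
    by_cases hab : a ≤ b
    · simp only [List.orderedInsert, if_pos hab]
      exact List.Forall₂.cons hxa (List.forall₂_refl _)
    · simp only [List.orderedInsert, if_neg hab]
      refine List.Forall₂.cons (hx b (by simp)) ?_
      exact aux_forall2 b a t hl.of_cons (fun y hy => (List.pairwise_cons.mp hl).1 y hy)
        (le_of_not_ge hab)

lemma sort_insert_eq (a : ℕ) (s : Finset ℕ) (ha : a ∉ s) :
    (insert a s).sort (· ≤ ·) = List.orderedInsert (· ≤ ·) a (s.sort (· ≤ ·)) := by
  refine List.Perm.eq_of_pairwise' (Finset.pairwise_sort _ _)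
    ((Finset.pairwise_sort s (· ≤ ·)).orderedInsert a _) ?_
  refine ((Finset.sort_perm_toList _ _).trans ?_).trans (List.perm_orderedInsert _ _ _).symm
  exact (Finset.toList_insert ha).trans (List.Perm.cons a (Finset.sort_perm_toList _ _).symm)

theorem stmt_2 (n k : ℕ) (F : Finset (Finset ℕ))
    (hsub : ∀ A ∈ F, A ⊆ Finset.Icc 1 n) (hcard : ∀ A ∈ F, A.card = k)
    (hinit : ∀ A B : Finset ℕ, A ⊆ Finset.Icc 1 n → prec A B → B ∈ F → A ∈ F) :
    Finset.shadow (F.filter (fun A => 1 ∉ A)) ⊆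
      (F.filter (fun A => 1 ∈ A)).image (fun A => A.erase 1) := by
  intro B hB
  rw [Finset.mem_shadow_iff] at hB
  obtain ⟨A, hA, a, haA, hBA⟩ := hB
  rw [Finset.mem_filter] at hA
  obtain ⟨hAF, h1A⟩ := hA
  have h1e : (1:ℕ) ∉ A.erase a := fun h => h1A (Finset.mem_of_mem_erase h)
  have han : a ∈ Finset.Icc 1 n := hsub A hAF haA
  have h1a : 1 ≤ a := (Finset.mem_Icc.mp han).1
  have hallge : ∀ y ∈ (A.erase a).sort (· ≤ ·), 1 ≤ y := by
    intro y hy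
    exact (Finset.mem_Icc.mp (hsub A hAF (Finset.mem_of_mem_erase
      ((Finset.mem_sort _).mp hy)))).1
  have hprec : prec (insert 1 (A.erase a)) A := by
    unfold prec
    rw [sort_insert_eq 1 _ h1e]
    conv_rhs => rw [(Finset.insert_erase haA).symm]
    rw [sort_insert_eq a _ (Finset.notMem_erase a A)]
    have heq : List.orderedInsert (· ≤ ·) 1 ((A.erase a).sort (· ≤ ·)) =
        1 :: (A.erase a).sort (· ≤ ·) := by
      cases h : (A.erase a).sort (· ≤ ·) with
      | nil => rfl
      | cons b t =>
        simp only [List.orderedInsert, if_pos (hallge b (by rw [h]; simp))]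
    rw [heq]
    exact aux_forall2 1 a _ (Finset.pairwise_sort _ _) hallge h1a
  have hsub' : insert 1 (A.erase a) ⊆ Finset.Icc 1 n := by
    intro x hx
    rcases Finset.mem_insert.mp hx with h | h
    · subst h; exact Finset.mem_Icc.mpr ⟨le_refl 1, h1a.trans (Finset.mem_Icc.mp han).2⟩
    · exact hsub A hAF (Finset.mem_of_mem_erase h)
  have hF' : insert 1 (A.erase a) ∈ F := hinit _ _ hsub' hprec hAF
  refine Finset.mem_image.mpr ⟨insert 1 (A.erase a), ?_, ?_⟩
  · exact Finset.mem_filter.mpr ⟨hF', Finset.mem_insert_self _ _⟩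
  · rw [Finset.erase_insert h1e]; exact hBA
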